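/- Let 0 < q < 1/2 and let f be a solution of Schilling's problem. If f vanishes on the interval (-q, 0), then f is identically zero. -/

import Mathlib

theorem schilling_vanish_neg_interval (q : ℝ) (hq : 0 < q) (hq1 : q < 1 / 2)
    (f : ℝ → ℝ)
    (heq : ∀ x : ℝ, f (q * x) = 1 / (4 * q) * (f (x - 1) + f (x + 1) + 2 * f x))
    (hQ : ∀ x : ℝ, |x| > q / (1 - q) → f x = 0)
    (h0 : ∀ x : ℝ, -q < x → x < 0 → f x = 0) :
    ∀ x : ℝ, f x = 0 := by
  have h1q : (0:ℝ) < 1 - q := by linarith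
  set Q : ℝ := q / (1 - q) with hQdef
  have hQpos : 0 < Q := div_pos hq h1q
  have hQ1 : Q < 1 := by rw [hQdef, div_lt_one h1q]; linarith
  have hq0 : q ≠ 0 := ne_of_gt hq
  have h4q : (4*q) ≠ 0 := by positivity
  have hZ : ∀ x : ℝ, (Q < x ∨ x < -Q) → f x = 0 := by
    intro x hx
    apply hQ
    rcases hx with h | h
    · exact lt_abs.mpr (Or.inl h)
    · exact lt_abs.mpr (Or.inr (by linarith))
  have hf0 : f 0 = 0 := by
    have h := heq 0
    rw [mul_zero] at h
    have e1 : f (0 - 1) = 0 := hZ _ (Or.inr (by linarith))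
    have e2 : f (0 + 1) = 0 := hZ _ (Or.inl (by linarith))
    rw [e1, e2] at h
    field_simp at h
    have h' : (4*q - 2) * f 0 = 0 := by linear_combination h
    rcases mul_eq_zero.mp h' with hc | hc
    · linarith
    · exact hc
  have negstep : ∀ a : ℝ, q ≤ a → (∀ t, -a < t → t ≤ 0 → f t = 0) →
      ∀ t, -(q*(1+a)) < t → t ≤ 0 → f t = 0 := by
    intro a haq ih t ht1 ht2
    by_cases hc : -q < t
    · exact ih t (by linarith) ht2
    · push_neg at hc
      have hx : q * (t / q) = t := by field_simp
      have h := heq (t / q)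
      rw [hx] at h
      have hle : t / q ≤ -1 := by
        rw [div_le_iff₀ hq]; linarith
      have hgt : -1 - a < t / q := by
        rw [lt_div_iff₀ hq]; linarith
      have e1 : f (t/q - 1) = 0 := hZ _ (Or.inr (by linarith))
      have e2 : f (t/q) = 0 := hZ _ (Or.inr (by linarith))
      have e3 : f (t/q + 1) = 0 := ih _ (by linarith) (by linarith)
      rw [e1, e2, e3] at h
      rw [h]; ring
  have negN : ∀ n : ℕ, ∀ t : ℝ, -(Q*(1 - q^(n+1))) < t → t ≤ 0 → f t = 0 := by
    intro n
    induction n with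
    | zero =>
      intro t ht1 ht2
      have hQq : Q * (1 - q^(0+1)) = q := by
        rw [hQdef]; field_simp; ring
      rw [hQq] at ht1
      rcases eq_or_lt_of_le ht2 with h | h
      · rw [h]; exact hf0
      · exact h0 t ht1 h
    | succ n ihn =>
      intro t ht1 ht2
      have hpow : q^(n+1) ≤ q := by
        calc q^(n+1) ≤ q^1 := pow_le_pow_of_le_one (le_of_lt hq) (by linarith) (by omega)
        _ = q := pow_one q
      have hQq : Q * (1 - q) = q := by rw [hQdef]; field_simp
      have ha : q ≤ Q*(1-q^(n+1)) := by nlinarith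
      apply negstep (Q*(1-q^(n+1))) ha ihn t _ ht2
      have key : q*(1 + Q*(1-q^(n+1))) = Q*(1-q^(n+1+1)) := by
        linear_combination -hQq
      rw [key]
      exact ht1
  have negQ : ∀ t : ℝ, -Q < t → t ≤ 0 → f t = 0 := by
    intro t ht1 ht2
    have hε : 0 < (Q + t)/Q := div_pos (by linarith) hQpos
    obtain ⟨n, hn⟩ := exists_pow_lt_of_lt_one hε (by linarith : q < 1)
    apply negN n t _ ht2
    have h1 : q^(n+1) ≤ q^n := by
      calc q^(n+1) = q * q^n := by ring
      _ ≤ 1 * q^n := by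
        apply mul_le_mul_of_nonneg_right (by linarith) (by positivity)
      _ = q^n := one_mul _
    have h2 : q^n * Q < Q + t := (lt_div_iff₀ hQpos).mp hn
    nlinarith [pow_pos hq n]
  have posrel : ∀ t : ℝ, 0 < t → t < 1 → f t = -2 * f (t - 1) := by
    intro t ht1 ht2
    have h := heq (t - 1)
    have e0 : f (q * (t-1)) = 0 := h0 _ (by nlinarith) (by nlinarith)
    have e1 : f (t - 1 - 1) = 0 := hZ _ (Or.inr (by linarith))
    have e2 : t - 1 + 1 = t := by ring
    rw [e0, e1, e2] at h
    field_simp at h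
    linarith
  have hrel : f (1 - Q) = -2 * f (-Q) := by
    have h := heq (-Q)
    have e0 : f (q * -Q) = 0 := h0 _ (by nlinarith) (by nlinarith)
    have e1 : f (-Q - 1) = 0 := hZ _ (Or.inr (by linarith))
    have e2 : -Q + 1 = 1 - Q := by ring
    rw [e0, e1, e2] at h
    field_simp at h
    linarith
  have hmQ : f (-Q) = 0 := by
    have h := heq (1 - Q)
    have e1 : (1:ℝ) - Q - 1 = -Q := by ring
    have e2 : f (1 - Q + 1) = 0 := hZ _ (Or.inl (by linarith))
    have hs1 : 0 < q*(1-Q) := by nlinarith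
    have hs2 : q*(1-Q) < 1 := by nlinarith
    have e0 : f (q*(1-Q)) = 0 := by
      rw [posrel _ hs1 hs2]
      have hz : f (q*(1-Q) - 1) = 0 := by
        rcases lt_trichotomy (q*(1-Q) - 1) (-Q) with hlt | heqq | hgt
        · exact hZ _ (Or.inr hlt)
        · exfalso; nlinarith
        · exact negQ _ hgt (by nlinarith)
      rw [hz]; ring
    rw [e0, e1, e2, hrel] at h
    field_simp at h
    linarith
  intro x
  rcases lt_trichotomy x (-Q) with h1 | h1 | h1
  · exact hZ x (Or.inr h1)
  · rw [h1]; exact hmQ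
  · rcases le_or_gt x 0 with h2 | h2
    · exact negQ x h1 h2
    · rcases lt_or_ge x 1 with h3 | h3
      · rcases lt_trichotomy (x-1) (-Q) with h4 | h4 | h4
        · rw [posrel x h2 h3, hZ _ (Or.inr h4)]; ring
        · have hx1 : x = 1 - Q := by linarith
          rw [hx1, hrel, hmQ]; ring
        · rw [posrel x h2 h3, negQ _ h4 (by linarith)]; ring
      · exact hZ x (Or.inl (by linarith))
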